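/- Let n be a natural number, x : Fin n → ℤ with x ≠ 0, and ε > 0 a real number. Let S be a nonempty finite set of prime numbers such that every p ∈ S satisfies (p : ℝ) ≥ ‖x‖₁ / ‖x‖₀, and such that |S| ≥ 10 / ε. Then the number of primes p ∈ S for which |{v : x_v ≠ 0 and p divides x_v}| ≥ ε · ‖x‖₀ is at most |S| / 10. (Equivalently, if P is drawn uniformly from S, then ℙ(‖x‖₀ − ‖x‖_{0;𝔽_P} ≥ ε‖x‖₀) ≤ 1/10.) -/

import Mathlib

private lemma sum_le_prod_of_two_le (T : Finset ℕ) (h : ∀ p ∈ T, 2 ≤ p) :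
    ∑ p ∈ T, p ≤ ∏ p ∈ T, p := by
  classical
  induction T using Finset.induction_on with
  | empty => simp
  | @insert a s ha ih =>
    rw [Finset.sum_insert ha, Finset.prod_insert ha]
    have h2 : 2 ≤ a := h a (Finset.mem_insert_self a s)
    have hs : ∑ p ∈ s, p ≤ ∏ p ∈ s, p := ih (fun p hp => h p (Finset.mem_insert_of_mem hp))
    have hprod1 : 1 ≤ ∏ p ∈ s, p :=
      Finset.one_le_prod' (fun p hp => le_trans (by norm_num) (h p (Finset.mem_insert_of_mem hp)))
    rcases s.eq_empty_or_nonempty with rfl | hne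
    · simp [h2]
    · obtain ⟨b, hb⟩ := hne
      have hprod2 : 2 ≤ ∏ p ∈ s, p := by
        calc 2 ≤ b := h b (Finset.mem_insert_of_mem hb)
        _ ≤ ∏ p ∈ s, p := Finset.single_le_prod' (fun p hp =>
            le_trans one_le_two (h p (Finset.mem_insert_of_mem hp))) hb
      nlinarith

private lemma sum_primes_dvd_le (T : Finset ℕ) (m : ℕ) (hm : m ≠ 0)
    (hp : ∀ p ∈ T, p.Prime) (hd : ∀ p ∈ T, p ∣ m) : ∑ p ∈ T, p ≤ m := by
  have h1 : (∏ p ∈ T, p) ∣ m := Finset.prod_primes_dvd m (fun a ha => (hp a ha).prime) hd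
  exact le_trans (sum_le_prod_of_two_le T (fun p hpT => (hp p hpT).two_le))
    (Nat.le_of_dvd (Nat.pos_of_ne_zero hm) h1)

theorem stmt_11 (n : ℕ) (x : Fin n → ℤ) (hx : x ≠ 0) (ε : ℝ) (hε : 0 < ε)
    (S : Finset ℕ) (hSne : S.Nonempty) (hSprime : ∀ p ∈ S, p.Prime)
    (hSmin : ∀ p ∈ S, ((∑ v, |x v| : ℤ) : ℝ) /
      ((Finset.univ.filter fun v => x v ≠ 0).card : ℝ) ≤ (p : ℝ))
    (hScard : 10 / ε ≤ (S.card : ℝ)) :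
    (((S.filter fun (p : ℕ) =>
        ε * ((Finset.univ.filter fun v => x v ≠ 0).card : ℝ) ≤
          ((Finset.univ.filter fun v => x v ≠ 0 ∧ (p : ℤ) ∣ x v).card : ℝ)).card : ℝ)
      ≤ (S.card : ℝ) / 10) := by
  classical
  set V : Finset (Fin n) := Finset.univ.filter fun v => x v ≠ 0 with hV
  set N : ℕ := V.card with hN
  set L : ℤ := ∑ v, |x v| with hL
  have hNpos : 0 < N := by
    obtain ⟨v, hv⟩ : ∃ v, x v ≠ 0 := by
      by_contra h
      push_neg at h
      exact hx (funext h)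
    exact Finset.card_pos.mpr ⟨v, Finset.mem_filter.mpr ⟨Finset.mem_univ v, hv⟩⟩
  have hNR : (0:ℝ) < (N:ℝ) := by exact_mod_cast hNpos
  set M : ℝ := ((L:ℝ)) / (N:ℝ) with hM
  have hcount : ∀ p : ℕ,
      (Finset.univ.filter fun v => x v ≠ 0 ∧ (p : ℤ) ∣ x v) =
        V.filter fun v => (p:ℤ) ∣ x v := by
    intro p
    ext v
    simp [hV, Finset.mem_filter, and_assoc]
  have hswapN : ∑ p ∈ S, (V.filter fun v => (p:ℤ) ∣ x v).card
      = ∑ v ∈ V, (S.filter fun (p : ℕ) => (p:ℤ) ∣ x v).card := by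
    simp only [Finset.card_filter]
    exact Finset.sum_comm
  have hswap : ∑ p ∈ S, ((V.filter fun v => (p:ℤ) ∣ x v).card : ℝ)
      = ∑ v ∈ V, ((S.filter fun (p : ℕ) => (p:ℤ) ∣ x v).card : ℝ) := by
    exact_mod_cast congrArg (Nat.cast : ℕ → ℝ) hswapN
  have hperv : ∀ v ∈ V,
      ((S.filter fun (p : ℕ) => (p:ℤ) ∣ x v).card : ℝ) * M ≤ ((|x v| : ℤ) : ℝ) := by
    intro v hv
    have hxv : x v ≠ 0 := by
      have := (Finset.mem_filter.mp (hV ▸ hv)).2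
      simpa using this
    set T := S.filter fun (p : ℕ) => (p:ℤ) ∣ x v with hT
    have hTsub : T ⊆ S := Finset.filter_subset _ _
    have hstep : (T.card : ℝ) * M ≤ ∑ p ∈ T, (p:ℝ) := by
      calc (T.card : ℝ) * M = ∑ _p ∈ T, M := by rw [Finset.sum_const, nsmul_eq_mul]
      _ ≤ ∑ p ∈ T, (p:ℝ) := Finset.sum_le_sum (fun p hp => hSmin p (hTsub hp))
    refine hstep.trans ?_
    have hsum : ∑ p ∈ T, p ≤ (x v).natAbs := by
      apply sum_primes_dvd_le T _ (by simpa using hxv)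
        (fun p hp => hSprime p (hTsub hp))
      intro p hp
      have : (p:ℤ) ∣ x v := (Finset.mem_filter.mp hp).2
      rwa [Int.natCast_dvd] at this
    have h1 : ((∑ p ∈ T, p : ℕ) : ℝ) ≤ ((x v).natAbs : ℝ) := by exact_mod_cast hsum
    rw [Nat.cast_sum] at h1
    refine h1.trans (le_of_eq ?_)
    push_cast [Nat.cast_natAbs]
    rfl
  have hM1 : 1 ≤ M := by
    rw [hM, le_div_iff₀ hNR, one_mul]
    have hNL : (N:ℤ) ≤ L := by
      rw [hL, hN]
      calc (V.card : ℤ) = ∑ _v ∈ V, 1 := by simp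
      _ ≤ ∑ v ∈ V, |x v| := Finset.sum_le_sum (fun v hv => Int.one_le_abs (by
          have := (Finset.mem_filter.mp hv).2
          simpa using this))
      _ ≤ ∑ v, |x v| := Finset.sum_le_sum_of_subset_of_nonneg (Finset.filter_subset _ _)
          (fun v _ _ => abs_nonneg _)
    exact_mod_cast hNL
  have hMpos : 0 < M := lt_of_lt_of_le one_pos hM1
  have hLN : (L:ℝ) = (N:ℝ) * M := by rw [hM]; field_simp
  have htot : ∑ p ∈ S, ((V.filter fun v => (p:ℤ) ∣ x v).card : ℝ) ≤ (N:ℝ) := by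
    rw [hswap]
    have h1 : (∑ v ∈ V, ((S.filter fun (p : ℕ) => (p:ℤ) ∣ x v).card : ℝ)) * M ≤ (L:ℝ) := by
      rw [Finset.sum_mul]
      calc ∑ v ∈ V, ((S.filter fun (p : ℕ) => (p:ℤ) ∣ x v).card : ℝ) * M
          ≤ ∑ v ∈ V, ((|x v| : ℤ) : ℝ) := Finset.sum_le_sum hperv
        _ ≤ ∑ v, ((|x v| : ℤ) : ℝ) := Finset.sum_le_sum_of_subset_of_nonneg
            (Finset.filter_subset _ _) (fun v _ _ => by positivity)
        _ = (L:ℝ) := by rw [hL]; push_cast; ring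
    rw [hLN] at h1
    exact le_of_mul_le_mul_right h1 hMpos
  set B := S.filter fun (p : ℕ) =>
      ε * ((Finset.univ.filter fun v => x v ≠ 0).card : ℝ) ≤
        ((Finset.univ.filter fun v => x v ≠ 0 ∧ (p : ℤ) ∣ x v).card : ℝ) with hB
  have hBbound : (B.card : ℝ) * (ε * (N:ℝ)) ≤ (N:ℝ) := by
    calc (B.card : ℝ) * (ε * (N:ℝ)) = ∑ _p ∈ B, ε * (N:ℝ) := by
          rw [Finset.sum_const, nsmul_eq_mul]
      _ ≤ ∑ p ∈ B, ((V.filter fun v => (p:ℤ) ∣ x v).card : ℝ) := by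
          apply Finset.sum_le_sum
          intro p hp
          have h2 := (Finset.mem_filter.mp hp).2
          rw [hcount p] at h2
          exact h2
      _ ≤ ∑ p ∈ S, ((V.filter fun v => (p:ℤ) ∣ x v).card : ℝ) := by
          apply Finset.sum_le_sum_of_subset_of_nonneg (Finset.filter_subset _ _)
          intro p _ _; exact Nat.cast_nonneg _
      _ ≤ (N:ℝ) := htot
  have hBε : (B.card : ℝ) ≤ 1 / ε := by
    rw [le_div_iff₀ hε]
    nlinarith
  calc (B.card : ℝ) ≤ 1 / ε := hBε
    _ ≤ (S.card : ℝ) / 10 := by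
        rw [div_le_iff₀ hε] at hScard
        rw [div_le_div_iff₀ hε (by norm_num)]
        nlinarith
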